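/- arXiv:1605.07594 — 5 statements merged into one kernel-verified Lean document; each statement's English description precedes it below -/
import Mathlib

section
/- Let K be a field containing all p-th roots of unity with char(K) ≠ p, and suppose that for every primitive p-th root of unity ξ_p the equation x^p = ξ_p^q has no solution in K unless p divides q (the 'irreducible condition'). Let Λ be the Novikov field over K with value group Γ ≤ ℝ, i.e. formal sums Σ_{g∈Γ} a_g t^g with a_g ∈ K such that for every C ∈ ℝ only finitely many g < C have a_g ≠ 0. Then Λ also satisfies the irreducible condition: for any primitive p-th root of unity ξ_p and any q not divisible by p, the equation x^p = ξ_p^q has no solution in Λ. -/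
open scoped BigOperators

/-- A coefficient function `a : ℝ → K` represents an element of the Novikov field
`Λ^{K,Γ}` if its support lies in `Γ` and is finite below every level `C`. -/
def IsNovikov {K : Type*} [Field K] (Γ : AddSubgroup ℝ) (a : ℝ → K) : Prop :=
  (∀ g : ℝ, a g ≠ 0 → g ∈ Γ) ∧ ∀ C : ℝ, {g : ℝ | a g ≠ 0 ∧ g < C}.Finite

/-- Multiplication of Novikov series (convolution of coefficient functions). -/
noncomputable def novMul {K : Type*} [Field K] (a b : ℝ → K) : ℝ → K :=
  fun g => ∑ᶠ h : ℝ, a h * b (g - h)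

/-- The unit Novikov series `t^0`. -/
noncomputable def novOne {K : Type*} [Field K] : ℝ → K :=
  fun g => if g = 0 then 1 else 0

/-- Powers of a Novikov series. -/
noncomputable def novPow {K : Type*} [Field K] (a : ℝ → K) : ℕ → ℝ → K
  | 0 => novOne
  | n + 1 => novMul a (novPow a n)

lemma novMul_lead {K : Type*} [Field K] (a b : ℝ → K) (μ ν : ℝ)
    (ha : ∀ g, g < μ → a g = 0) (hb : ∀ g, g < ν → b g = 0) :
    (∀ g, g < μ + ν → novMul a b g = 0) ∧ novMul a b (μ + ν) = a μ * b ν := by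
  constructor
  · intro g hg
    apply finsum_eq_zero_of_forall_eq_zero
    intro h
    by_cases hh : h < μ
    · rw [ha h hh, zero_mul]
    · rw [hb (g - h) (by push_neg at hh; linarith), mul_zero]
  · show (∑ᶠ h : ℝ, a h * b (μ + ν - h)) = a μ * b ν
    have := finsum_eq_single (fun h : ℝ => a h * b (μ + ν - h)) μ ?_
    · simpa using this
    · intro h hh
      rcases lt_or_gt_of_ne hh with h1 | h1
      · simp [ha h h1]
      · simp [hb (μ + ν - h) (by linarith)]

lemma novPow_lead {K : Type*} [Field K] (a : ℝ → K) (μ : ℝ)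
    (ha : ∀ g, g < μ → a g = 0) (n : ℕ) :
    (∀ g, g < n * μ → novPow a n g = 0) ∧ novPow a n (n * μ) = (a μ) ^ n := by
  induction n with
  | zero =>
    constructor
    · intro g hg
      simp only [Nat.cast_zero, zero_mul] at hg
      simp [novPow, novOne, ne_of_lt hg]
    · simp [novPow, novOne]
  | succ n ih =>
    have h := novMul_lead a (novPow a n) μ (n * μ) ha ih.1
    have hc : ((n + 1 : ℕ) : ℝ) * μ = μ + n * μ := by push_cast; ring
    constructor
    · intro g hg
      rw [hc] at hg
      exact h.1 g hg
    · show novMul a (novPow a n) (((n : ℕ) + 1 : ℕ) * μ) = a μ ^ (n + 1)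
      rw [hc, h.2, ih.2, pow_succ]
      ring

/-- If the field `K` satisfies the irreducible condition for the prime
`p` (char `K ≠ p`, `K` contains all `p`-th roots of unity, and `x ^ p = ξ_p ^ q` has no
solution in `K` unless `p ∣ q`), then the Novikov field `Λ^{K,Γ}` also satisfies the
irreducible condition: for any primitive `p`-th root of unity `ξ` and any `q` not
divisible by `p`, the equation `x ^ p = ξ ^ q` has no solution among Novikov series. -/
theorem novikov_irreducible_condition
    {K : Type*} [Field K] (p : ℕ) (hp : p.Prime)
    (hchar : (p : K) ≠ 0)
    (hroots : ∃ ζ : K, IsPrimitiveRoot ζ p)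
    (hK : ∀ (ξ : K), IsPrimitiveRoot ξ p → ∀ (x : K) (q : ℕ), x ^ p = ξ ^ q → p ∣ q)
    (Γ : AddSubgroup ℝ)
    (ξ : K) (hξ : IsPrimitiveRoot ξ p) (q : ℕ) (hq : ¬ p ∣ q) :
    ¬ ∃ a : ℝ → K, IsNovikov Γ a ∧
        novPow a p = fun g : ℝ => if g = 0 then ξ ^ q else 0 := by
  rintro ⟨a, ⟨_, hfin⟩, hpow⟩
  have hξ0 : ξ ≠ 0 := hξ.ne_zero hp.ne_zero
  have hξq : ξ ^ q ≠ 0 := pow_ne_zero _ hξ0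
  -- a is not identically zero
  have hane : ∃ g : ℝ, a g ≠ 0 := by
    by_contra hz
    push_neg at hz
    have hp1 : 1 ≤ p := hp.one_lt.le.trans' (by norm_num)
    obtain ⟨m, hm⟩ : ∃ m, p = m + 1 := ⟨p - 1, by omega⟩
    have : novPow a p 0 = 0 := by
      rw [hm]
      show (∑ᶠ h : ℝ, a h * novPow a m (0 - h)) = 0
      apply finsum_eq_zero_of_forall_eq_zero
      intro h; simp [hz h]
    rw [hpow] at this
    simp [hξq] at this
  obtain ⟨g₀, hg₀⟩ := hane
  -- minimal element of the support
  have hS : ({g : ℝ | a g ≠ 0 ∧ g < g₀ + 1}).Finite := hfin (g₀ + 1)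
  have hSne : ({g : ℝ | a g ≠ 0 ∧ g < g₀ + 1}).Nonempty := ⟨g₀, hg₀, by linarith⟩
  have hFne : hS.toFinset.Nonempty := by
    rwa [← Set.Finite.toFinset_nonempty hS] at hSne
  set μ := hS.toFinset.min' hFne with hμdef
  have hμmem : μ ∈ hS.toFinset := hS.toFinset.min'_mem hFne
  rw [Set.Finite.mem_toFinset] at hμmem
  have haμ : a μ ≠ 0 := hμmem.1
  have hmin : ∀ g, g < μ → a g = 0 := by
    intro g hg
    by_contra hga
    have hgS : g ∈ hS.toFinset := by
      rw [Set.Finite.mem_toFinset]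
      exact ⟨hga, by linarith [hμmem.2]⟩
    have := hS.toFinset.min'_le g hgS
    linarith
  have hlead := (novPow_lead a μ hmin p).2
  rw [hpow] at hlead
  by_cases hμ0 : (p : ℝ) * μ = 0
  · have hμz : μ = 0 := by
      have : (p : ℝ) ≠ 0 := Nat.cast_ne_zero.mpr hp.ne_zero
      exact (mul_eq_zero.mp hμ0).resolve_left this
    simp only [hμ0, if_pos rfl] at hlead
    exact hq (hK ξ hξ (a μ) q hlead.symm)
  · simp only [if_neg hμ0] at hlead
    exact haμ (pow_eq_zero_iff hp.ne_zero |>.mp hlead.symm)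
end

section
/- Let Λ be a Novikov field over K with value group Γ, and let (V, ℓ) be a filtered Λ-vector space with filtration function ℓ satisfying ℓ(λv) = ℓ(v) − ν(λ). If {v_1, …, v_n} is an orthogonal set in V (meaning ℓ(Σ λ_i v_i) = max_i (ℓ(v_i) − ν(λ_i)) for all λ_i ∈ Λ), and w_1, …, w_n are vectors with ℓ(w_i) < ℓ(v_i) for each i, then {v_1 + w_1, …, v_n + w_n} is also an orthogonal set. -/
open scoped BigOperators

/-- A finite family `v : ι → V` is orthogonal (over the Novikov field `Λ`) with respect to the
filtration function `ℓ` if `ℓ (∑ λᵢ • vᵢ) = maxᵢ ℓ (λᵢ • vᵢ)` for all scalars. -/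
def IsOrthogonal (Λ : Type*) {V ι : Type*} [Field Λ] [AddCommGroup V] [Module Λ V]
    [Fintype ι] (ℓ : V → EReal) (v : ι → V) : Prop :=
  ∀ c : ι → Λ, ℓ (∑ i, c i • v i) = Finset.univ.sup fun i => ℓ (c i • v i)

private lemma ereal_sub_lt_sub {a b : EReal} (h : a < b) (r : ℝ) : a - (r : EReal) < b - r := by
  simpa [sub_eq_add_neg, ← EReal.coe_neg] using EReal.add_lt_add_right_coe h (-r)

/-- A strictly-lower-filtration perturbation of an orthogonal family is
orthogonal. -/
theorem strict_lower_perturbation_preserves_orthogonality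
    {Λ V ι : Type*} [Field Λ] [AddCommGroup V] [Module Λ V] [Fintype ι]
    (ν : Λ → ℝ) (ℓ : V → EReal)
    (hzero : ℓ 0 = ⊥)
    (hsmul : ∀ (c : Λ) (x : V), c ≠ 0 → ℓ (c • x) = ℓ x - (ν c : EReal))
    (hadd : ∀ x y : V, ℓ (x + y) ≤ max (ℓ x) (ℓ y))
    (hneg : ∀ x : V, ℓ (-x) = ℓ x)
    (v w : ι → V)
    (hv : IsOrthogonal Λ ℓ v)
    (hw : ∀ i, ℓ (w i) < ℓ (v i)) :
    IsOrthogonal Λ ℓ (fun i => v i + w i) := by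
  -- ultrametric: adding a strictly smaller element doesn't change the filtration level
  have key : ∀ x y : V, ℓ y < ℓ x → ℓ (x + y) = ℓ x := by
    intro x y h
    refine le_antisymm ((hadd x y).trans (max_le le_rfl h.le)) ?_
    by_contra hcon
    push_neg at hcon
    have : ℓ x ≤ max (ℓ (x + y)) (ℓ (-y)) := by
      have := hadd (x + y) (-y)
      simpa using this
    rw [hneg] at this
    exact absurd this (not_le.2 (max_lt hcon h))
  classical
  -- ℓ of a finite sum is at most the sup
  have hsum_le : ∀ (f : ι → V), ℓ (∑ i, f i) ≤ Finset.univ.sup fun i => ℓ (f i) := by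
    intro f
    induction (Finset.univ : Finset ι) using Finset.induction with
    | empty => simp [hzero]
    | @insert a s ha ih =>
      rw [Finset.sum_insert ha, Finset.sup_insert]
      exact (hadd _ _).trans (max_le_max le_rfl ih)
  intro c
  have hpt : ∀ i, ℓ (c i • (v i + w i)) = ℓ (c i • v i) := by
    intro i
    by_cases hc : c i = 0
    · simp [hc, hzero]
    · rw [hsmul _ _ hc, hsmul _ _ hc, key _ _ (hw i)]
  have hRHS : (Finset.univ.sup fun i => ℓ (c i • (fun i => v i + w i) i))
      = Finset.univ.sup fun i => ℓ (c i • v i) := Finset.sup_congr rfl fun i _ => hpt i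
  rw [hRHS]
  have hsplit : ∑ i, c i • (v i + w i) = (∑ i, c i • v i) + ∑ i, c i • w i := by
    rw [← Finset.sum_add_distrib]
    exact Finset.sum_congr rfl fun i _ => smul_add _ _ _
  show ℓ (∑ i, c i • (v i + w i)) = _
  rw [hsplit]
  have h1 : ℓ (∑ i, c i • v i) = Finset.univ.sup fun i => ℓ (c i • v i) := hv c
  by_cases hex : ∃ i, c i ≠ 0
  · obtain ⟨j, hj⟩ := hex
    have hvj : (⊥ : EReal) < ℓ (v j) := lt_of_le_of_lt bot_le (hw j)
    have hgj : (⊥ : EReal) < ℓ (c j • v j) := by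
      rw [hsmul _ _ hj]
      calc (⊥ : EReal) = ⊥ - (ν (c j) : EReal) := (EReal.bot_sub _).symm
        _ < ℓ (v j) - ν (c j) := ereal_sub_lt_sub hvj _
    have hgbot : (⊥ : EReal) < Finset.univ.sup fun i => ℓ (c i • v i) :=
      lt_of_lt_of_le hgj (Finset.le_sup (f := fun i => ℓ (c i • v i)) (Finset.mem_univ j))
    have h2 : ℓ (∑ i, c i • w i) < Finset.univ.sup fun i => ℓ (c i • v i) := by
      refine lt_of_le_of_lt (hsum_le fun i => c i • w i) ?_
      rw [Finset.sup_lt_iff hgbot]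
      intro i _
      by_cases hc : c i = 0
      · simpa [hc, hzero] using hgbot
      · calc ℓ (c i • w i) = ℓ (w i) - (ν (c i) : EReal) := hsmul _ _ hc
          _ < ℓ (v i) - ν (c i) := ereal_sub_lt_sub (hw i) _
          _ = ℓ (c i • v i) := (hsmul _ _ hc).symm
          _ ≤ _ := Finset.le_sup (f := fun i => ℓ (c i • v i)) (Finset.mem_univ i)
    rw [key _ _ (h2.trans_eq h1.symm)]
    exact h1
  · push_neg at hex
    have hz : ∀ i, c i • w i = 0 := fun i => by rw [hex i, zero_smul]
    simp only [hz, Finset.sum_const_zero, add_zero]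
    exact h1
end

section
/- Let K satisfy the irreducible condition for the prime p and let Λ = Λ^{K,ℝ_{>0}} denote the set of Novikov series with strictly positive valuation. For any polynomial h(x) ∈ Λ^{K,ℝ_{>0}}[x] of degree less than p, the equation x^p = 1 + h(x) has a solution in the Novikov field Λ^{K,ℝ}; while for any q not divisible by p and any such h, the equation x^p = ξ_p^q + h(x) has no solution in Λ^{K,ℝ}. -/
open scoped BigOperators

namespace NovAux


variable {K : Type*} [Field K]

/-- The Novikov finiteness condition. -/
def NovFin (a : ℝ → K) : Prop := ∀ C : ℝ, {g : ℝ | a g ≠ 0 ∧ g < C}.Finite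

theorem NovFin.isPWO {a : ℝ → K} (ha : NovFin a) : (Function.support a).IsPWO := by
  refine Set.IsWF.isPWO ?_
  rw [Set.isWF_iff_no_descending_seq]
  intro f hf hmem
  have hfin : {g : ℝ | a g ≠ 0 ∧ g < f 0 + 1}.Finite := ha _
  have hsub : Set.range f ⊆ {g : ℝ | a g ≠ 0 ∧ g < f 0 + 1} := by
    rintro _ ⟨n, rfl⟩
    exact ⟨hmem n, lt_of_le_of_lt (hf.antitone (Nat.zero_le n)) (lt_add_one _)⟩
  exact Set.infinite_range_of_injective hf.injective (hfin.subset hsub)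

/-- The Hahn series attached to a Novikov function. -/
noncomputable def toH (a : ℝ → K) (ha : NovFin a) : HahnSeries ℝ K := ⟨a, ha.isPWO⟩

@[simp] theorem toH_coeff (a : ℝ → K) (ha : NovFin a) : (toH a ha).coeff = a := rfl

/-- Novikov condition for Hahn series. -/
def HNov (x : HahnSeries ℝ K) : Prop := NovFin x.coeff

theorem NovFin.bddBelow {a : ℝ → K} (ha : NovFin a) : ∃ m : ℝ, ∀ g, a g ≠ 0 → m ≤ g := by
  classical
  set F := (ha 0).toFinset with hF
  by_cases hne : F.Nonempty
  · refine ⟨min (F.min' hne) 0, fun g hg => ?_⟩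
    rcases lt_or_ge g 0 with h | h
    · exact le_trans (min_le_left _ _) (F.min'_le g (by simp [hF, Set.Finite.mem_toFinset]; exact ⟨hg, h⟩))
    · exact le_trans (min_le_right _ _) h
  · refine ⟨0, fun g hg => ?_⟩
    by_contra hlt
    exact hne ⟨g, by simp [hF, Set.Finite.mem_toFinset]; exact ⟨hg, by linarith [not_le.1 hlt]⟩⟩

theorem hnov_zero : HNov (0 : HahnSeries ℝ K) := by
  intro C
  convert Set.finite_empty using 1
  ext g; simp

theorem hnov_single (k : K) : HNov (HahnSeries.single (0 : ℝ) k) := by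
  intro C
  apply (Set.finite_singleton (0:ℝ)).subset
  rintro g ⟨hg, -⟩
  by_contra h
  exact hg (HahnSeries.coeff_single_of_ne (by simpa using h))

theorem hnov_one : HNov (1 : HahnSeries ℝ K) := by
  intro C
  apply (Set.finite_singleton (0:ℝ)).subset
  rintro g ⟨hg, -⟩
  by_contra h
  exact hg (by rw [HahnSeries.coeff_one, if_neg (by simpa using h)])

theorem hnov_C (k : K) : HNov (HahnSeries.C k : HahnSeries ℝ K) := by
  simpa [HahnSeries.C_apply] using hnov_single k

theorem HNov.add {x y : HahnSeries ℝ K} (hx : HNov x) (hy : HNov y) : HNov (x + y) := by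
  intro C
  apply ((hx C).union (hy C)).subset
  rintro g ⟨hg, hgC⟩
  rw [HahnSeries.coeff_add] at hg
  by_cases h : x.coeff g = 0
  · exact Or.inr ⟨fun h' => hg (by rw [h, h', add_zero]), hgC⟩
  · exact Or.inl ⟨h, hgC⟩

theorem HNov.neg {x : HahnSeries ℝ K} (hx : HNov x) : HNov (-x) := by
  intro C
  apply (hx C).subset
  rintro g ⟨hg, hgC⟩
  rw [HahnSeries.coeff_neg] at hg
  exact ⟨fun h => hg (by rw [h, neg_zero]), hgC⟩

theorem HNov.sub {x y : HahnSeries ℝ K} (hx : HNov x) (hy : HNov y) : HNov (x - y) := by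
  rw [sub_eq_add_neg]; exact hx.add hy.neg

theorem HNov.mul {x y : HahnSeries ℝ K} (hx : HNov x) (hy : HNov y) : HNov (x * y) := by
  intro C
  obtain ⟨mx, hmx⟩ := NovFin.bddBelow hx
  obtain ⟨my, hmy⟩ := NovFin.bddBelow hy
  apply (Set.Finite.image (fun pq : ℝ × ℝ => pq.1 + pq.2) ((hx (C - my)).prod (hy (C - mx)))).subset
  rintro g ⟨hg, hgC⟩
  obtain ⟨i, hi, j, hj, rfl⟩ := Set.mem_add.1 (HahnSeries.support_mul_subset ((HahnSeries.mem_support _ _).2 hg))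
  rw [HahnSeries.mem_support] at hi hj
  exact ⟨(i, j), ⟨⟨hi, by have := hmy j hj; linarith⟩, ⟨hj, by have := hmx i hi; linarith⟩⟩, rfl⟩

theorem HNov.pow {x : HahnSeries ℝ K} (hx : HNov x) : ∀ n : ℕ, HNov (x ^ n)
  | 0 => by rw [pow_zero]; exact hnov_one
  | n + 1 => by rw [pow_succ]; exact (hx.pow n).mul hx

theorem hnov_sum {ι : Type*} (s : Finset ι) (f : ι → HahnSeries ℝ K)
    (h : ∀ i ∈ s, HNov (f i)) : HNov (∑ i ∈ s, f i) := by
  classical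
  induction s using Finset.induction_on with
  | empty => simpa using hnov_zero
  | insert _ _ hni ih =>
      rw [Finset.sum_insert hni]
      exact (h _ (Finset.mem_insert_self _ _)).add (ih fun i hi => h i (Finset.mem_insert_of_mem hi))

theorem coeff_sum {ι : Type*} (s : Finset ι) (f : ι → HahnSeries ℝ K) (g : ℝ) :
    (∑ i ∈ s, f i).coeff g = ∑ i ∈ s, (f i).coeff g := by
  classical
  induction s using Finset.induction_on with
  | empty => simp
  | insert _ _ hni ih => rw [Finset.sum_insert hni, Finset.sum_insert hni, HahnSeries.coeff_add, ih]



/-- `Vge x v`: all coefficients of `x` below `v` vanish (valuation `≥ v`). -/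
def Vge (x : HahnSeries ℝ K) (v : ℝ) : Prop := ∀ h : ℝ, h < v → x.coeff h = 0

theorem Vge.mono {x : HahnSeries ℝ K} {v w : ℝ} (hx : Vge x v) (hw : w ≤ v) : Vge x w :=
  fun h hh => hx h (lt_of_lt_of_le hh hw)

theorem vge_zero (v : ℝ) : Vge (0 : HahnSeries ℝ K) v := fun _ _ => rfl

theorem vge_one : Vge (1 : HahnSeries ℝ K) 0 := fun h hh => by
  rw [HahnSeries.coeff_one, if_neg (by linarith)]

theorem vge_single (k : K) : Vge (HahnSeries.single (0 : ℝ) k) 0 := fun h hh =>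
  HahnSeries.coeff_single_of_ne (by linarith)

theorem vge_C (k : K) : Vge (HahnSeries.C k : HahnSeries ℝ K) 0 := by
  simpa [HahnSeries.C_apply] using vge_single k

theorem Vge.add {x y : HahnSeries ℝ K} {v : ℝ} (hx : Vge x v) (hy : Vge y v) : Vge (x + y) v :=
  fun h hh => by rw [HahnSeries.coeff_add, hx h hh, hy h hh, add_zero]

theorem Vge.neg {x : HahnSeries ℝ K} {v : ℝ} (hx : Vge x v) : Vge (-x) v :=
  fun h hh => by rw [HahnSeries.coeff_neg, hx h hh, neg_zero]

theorem Vge.sub {x y : HahnSeries ℝ K} {v : ℝ} (hx : Vge x v) (hy : Vge y v) : Vge (x - y) v := by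
  rw [sub_eq_add_neg]; exact hx.add hy.neg

theorem vge_sum {ι : Type*} (s : Finset ι) (f : ι → HahnSeries ℝ K) (v : ℝ)
    (h : ∀ i ∈ s, Vge (f i) v) : Vge (∑ i ∈ s, f i) v := by
  intro g hg
  rw [coeff_sum]
  exact Finset.sum_eq_zero fun i hi => h i hi g hg

theorem Vge.mul {x y : HahnSeries ℝ K} {v w : ℝ} (hx : Vge x v) (hy : Vge y w) :
    Vge (x * y) (v + w) := by
  intro h hh
  rw [HahnSeries.coeff_mul]
  apply Finset.sum_eq_zero
  rintro ⟨i, j⟩ hij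
  rw [Finset.mem_addAntidiagonal] at hij
  obtain ⟨hi, hj, hsum⟩ := hij
  rw [HahnSeries.mem_support] at hi hj
  exfalso
  have h1 : v ≤ i := by by_contra hc; exact hi (hx i (not_le.1 hc))
  have h2 : w ≤ j := by by_contra hc; exact hj (hy j (not_le.1 hc))
  simp only at hsum
  linarith

theorem vge_pow0 {x : HahnSeries ℝ K} (hx : Vge x 0) : ∀ n : ℕ, Vge (x ^ n) 0
  | 0 => by rw [pow_zero]; exact vge_one
  | n + 1 => by
      rw [pow_succ]
      exact ((vge_pow0 hx n).mul hx).mono (by norm_num)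

theorem Vge.pow {x : HahnSeries ℝ K} {v : ℝ} (hx : Vge x v) : ∀ n : ℕ, Vge (x ^ n) ((n : ℝ) * v)
  | 0 => by rw [pow_zero]; exact vge_one.mono (by norm_num)
  | n + 1 => by
      rw [pow_succ]
      exact ((hx.pow n).mul hx).mono (by push_cast; ring_nf; rfl)

theorem vge_natCast (n : ℕ) : Vge ((n : HahnSeries ℝ K)) 0 := by
  have h : ((n : HahnSeries ℝ K)) = HahnSeries.C ((n : K)) := by
    rw [map_natCast]
  rw [h]; exact vge_C _

theorem coeff_mul_of_vge {x y : HahnSeries ℝ K} {v w : ℝ} (hx : Vge x v) (hy : Vge y w) :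
    (x * y).coeff (v + w) = x.coeff v * y.coeff w := by
  classical
  rw [HahnSeries.coeff_mul]
  rw [Finset.sum_eq_single (v, w)]
  · rintro ⟨i, j⟩ hij hne
    rw [Finset.mem_addAntidiagonal] at hij
    obtain ⟨hi, hj, hsum⟩ := hij
    rw [HahnSeries.mem_support] at hi hj
    exfalso
    have h1 : v ≤ i := by by_contra hc; exact hi (hx i (not_le.1 hc))
    have h2 : w ≤ j := by by_contra hc; exact hj (hy j (not_le.1 hc))
    simp only at hsum
    have hiv : i = v := by linarith
    have hjw : j = w := by linarith
    exact hne (by rw [hiv, hjw])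
  · intro hnm
    rw [Finset.mem_addAntidiagonal] at hnm
    push_neg at hnm
    by_cases h1 : x.coeff v = 0
    · rw [h1, zero_mul]
    · by_cases h2 : y.coeff w = 0
      · rw [h2, mul_zero]
      · exact absurd rfl (hnm ((HahnSeries.mem_support _ _).2 h1) ((HahnSeries.mem_support _ _).2 h2))

theorem coeff_pow_of_vge {x : HahnSeries ℝ K} {v : ℝ} (hx : Vge x v) :
    ∀ n : ℕ, (x ^ n).coeff ((n : ℝ) * v) = (x.coeff v) ^ n
  | 0 => by
      rw [pow_zero, pow_zero, Nat.cast_zero, zero_mul, HahnSeries.coeff_one, if_pos rfl]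
  | n + 1 => by
      rw [pow_succ' x n, pow_succ' (x.coeff v) n]
      have harg : ((n + 1 : ℕ) : ℝ) * v = v + (n : ℝ) * v := by push_cast; ring
      rw [harg, coeff_mul_of_vge hx (hx.pow n), coeff_pow_of_vge hx n]



theorem binom (a u : HahnSeries ℝ K) (ha : Vge a 0) (hu : Vge u 0) :
    ∀ n : ℕ, ∃ R : HahnSeries ℝ K,
      (a + u) ^ n = a ^ n + (n : HahnSeries ℝ K) * a ^ (n - 1) * u + u ^ 2 * R ∧ Vge R 0
  | 0 => ⟨0, by norm_num, vge_zero 0⟩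
  | n + 1 => by
      obtain ⟨R, hR, hR0⟩ := binom a u ha hu n
      refine ⟨a * R + (n : HahnSeries ℝ K) * a ^ (n - 1) + u * R, ?_, ?_⟩
      · cases n with
        | zero =>
            push_cast at hR ⊢
            simp only [pow_zero, Nat.zero_sub, Nat.sub_self] at hR ⊢
            linear_combination (a + u) * hR
        | succ m =>
            simp only [Nat.add_sub_cancel] at hR ⊢
            push_cast at hR ⊢
            linear_combination (a + u) * hR
      · exact ((ha.mul hR0).mono (by norm_num)).add
          (((vge_natCast n).mul (vge_pow0 ha _)).mono (by norm_num)) |>.add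
          ((hu.mul hR0).mono (by norm_num))

/-- The perturbation polynomial. -/
noncomputable def Hh {p : ℕ} (Ci : Fin p → HahnSeries ℝ K) (Y : HahnSeries ℝ K) :
    HahnSeries ℝ K := ∑ i : Fin p, Ci i * Y ^ (i : ℕ)

/-- The error of an approximate solution. -/
noncomputable def Er {p : ℕ} (Ci : Fin p → HahnSeries ℝ K) (Y : HahnSeries ℝ K) :
    HahnSeries ℝ K := 1 + Hh Ci Y - Y ^ p

/-- The Newton-type iteration. -/
noncomputable def seqX {p : ℕ} (Ci : Fin p → HahnSeries ℝ K) (r : K) : ℕ → HahnSeries ℝ K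
  | 0 => 1
  | n + 1 => seqX Ci r n + HahnSeries.C r * Er Ci (seqX Ci r n)



theorem exists_sol (p : ℕ) (hp : p.Prime) (hchar : (p : K) ≠ 0)
    (c : Fin p → ℝ → K) (hc : ∀ i, NovFin (c i))
    (hcpos : ∀ (i : Fin p) (g : ℝ), c i g ≠ 0 → 0 < g) :
    ∃ X : HahnSeries ℝ K, HNov X ∧
      X ^ p = 1 + ∑ i : Fin p, toH (c i) (hc i) * X ^ (i : ℕ) := by
  classical
  set Ci : Fin p → HahnSeries ℝ K := fun i => toH (c i) (hc i) with hCi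
  have hCiN : ∀ i, HNov (Ci i) := fun i => hc i
  have hCipos : ∀ i g, (Ci i).coeff g ≠ 0 → 0 < g := fun i g => hcpos i g
  haveI hFinNe : Nonempty (Fin p) := ⟨⟨0, hp.pos⟩⟩
  -- choose a positive lower bound for the valuations of the coefficients
  obtain ⟨ε, hε, hVCi⟩ : ∃ ε : ℝ, 0 < ε ∧ ∀ i, Vge (Ci i) ε := by
    have key : ∀ i : Fin p, ∃ e : ℝ, 0 < e ∧ Vge (Ci i) e := by
      intro i
      by_cases h0 : Ci i = 0
      · exact ⟨1, one_pos, by rw [h0]; exact vge_zero 1⟩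
      · have hne := HahnSeries.support_nonempty_iff.2 h0
        have hdmem := (Ci i).isWF_support.min_mem hne
        rw [HahnSeries.mem_support] at hdmem
        refine ⟨(Ci i).isWF_support.min hne, hCipos i _ hdmem, ?_⟩
        intro h hh
        by_contra hne2
        exact (Set.IsWF.not_lt_min _ _ ((HahnSeries.mem_support _ _).2 hne2)) hh
    choose e he hVe using key
    refine ⟨Finset.univ.inf' Finset.univ_nonempty e, ?_,
      fun i => (hVe i).mono (Finset.inf'_le e (Finset.mem_univ i))⟩
    rw [Finset.lt_inf'_iff]
    exact fun i _ => he i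
  set X : ℕ → HahnSeries ℝ K := fun n => seqX Ci (p : K)⁻¹ n with hXdef
  have hX0 : X 0 = 1 := rfl
  have hXs : ∀ n, X (n + 1) = X n + HahnSeries.C (p : K)⁻¹ * Er Ci (X n) := fun n => rfl
  have hErEq : ∀ Y : HahnSeries ℝ K,
      Er Ci Y = 1 + (∑ i : Fin p, Ci i * Y ^ (i : ℕ)) - Y ^ p := fun Y => rfl
  have hnovE : ∀ Y, HNov Y → HNov (Er Ci Y) := by
    intro Y hY
    rw [hErEq]
    exact (hnov_one.add (hnov_sum _ _ fun i _ => (hCiN i).mul (hY.pow _))).sub (hY.pow p)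
  have hpC : ((p : HahnSeries ℝ K)) = HahnSeries.C ((p : K)) := (map_natCast _ p).symm
  have hpu : ∀ Y : HahnSeries ℝ K,
      (p : HahnSeries ℝ K) * (HahnSeries.C (p : K)⁻¹ * Er Ci Y) = Er Ci Y := by
    intro Y
    rw [← mul_assoc, hpC, ← map_mul, mul_inv_cancel₀ hchar, map_one, one_mul]
  -- the main invariant
  have hinv : ∀ n, HNov (X n) ∧ Vge (X n - 1) ε ∧ Vge (Er Ci (X n)) (((n : ℝ) + 1) * ε) := by
    intro n
    induction n with
    | zero =>
        refine ⟨hnov_one, by rw [hX0, sub_self]; exact vge_zero ε, ?_⟩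
        have hE1 : Er Ci (X 0) = ∑ i : Fin p, Ci i := by
          rw [hX0, hErEq]; simp
        rw [hE1]
        exact (vge_sum _ _ _ fun i _ => hVCi i).mono (by norm_num)
    | succ n ih =>
        obtain ⟨hN, h1, hE⟩ := ih
        have hcst : (0 : ℝ) ≤ (n : ℝ) := Nat.cast_nonneg n
        have hVXn0 : Vge (X n) 0 := by
          rw [show X n = (X n - 1) + 1 by ring]
          exact (h1.mono hε.le).add vge_one
        have hVu : Vge (HahnSeries.C (p : K)⁻¹ * Er Ci (X n)) (((n : ℝ) + 1) * ε) :=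
          ((vge_C _).mul hE).mono (by norm_num)
        have hVu0 : Vge (HahnSeries.C (p : K)⁻¹ * Er Ci (X n)) 0 := by
          refine hVu.mono ?_
          positivity
        set u := HahnSeries.C (p : K)⁻¹ * Er Ci (X n) with hu
        have hXu0 : Vge (X n + u) 0 := hVXn0.add hVu0
        refine ⟨?_, ?_, ?_⟩
        · rw [hXs]; exact hN.add ((hnov_C _).mul (hnovE _ hN))
        · have h : X (n + 1) - 1 = (X n - 1) + u := by rw [hXs, hu]; ring
          rw [h]
          refine h1.add (hVu.mono ?_)
          nlinarith
        · obtain ⟨R, hbin, hR0⟩ := binom (X n) u hVXn0 hVu0 p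
          have hgeo : ∀ k : ℕ,
              (∑ j ∈ Finset.range k, (X n + u) ^ j * (X n) ^ (k - 1 - j)) * u
                = (X n + u) ^ k - (X n) ^ k := by
            intro k
            have h := geom_sum₂_mul (X n + u) (X n) k
            rwa [add_sub_cancel_left] at h
          have hgs1 : (∑ j ∈ Finset.range (p - 1), (X n) ^ j) * (X n - 1)
              = (X n) ^ (p - 1) - 1 := geom_sum_mul _ _
          have hkey : Er Ci (X (n + 1)) =
              (∑ i : Fin p, Ci i *
                ((∑ j ∈ Finset.range (i : ℕ), (X n + u) ^ j * (X n) ^ ((i : ℕ) - 1 - j)) * u))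
              - (p : HahnSeries ℝ K) *
                  ((∑ j ∈ Finset.range (p - 1), (X n) ^ j) * (X n - 1)) * u
              - u ^ 2 * R := by
            have hEn := hpu (X n)
            rw [← hu, hErEq] at hEn
            rw [hXs, ← hu, hErEq, hbin, hgs1]
            have hsum : ∀ i : Fin p, Ci i *
                ((∑ j ∈ Finset.range (i : ℕ), (X n + u) ^ j * (X n) ^ ((i : ℕ) - 1 - j)) * u)
                  = Ci i * (X n + u) ^ (i : ℕ) - Ci i * (X n) ^ (i : ℕ) := by
              intro i; rw [hgeo]; ring
            rw [Finset.sum_congr rfl fun i _ => hsum i, Finset.sum_sub_distrib]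
            linear_combination -hEn
          rw [hkey]
          have hgsv : ∀ k : ℕ,
              Vge (∑ j ∈ Finset.range k, (X n + u) ^ j * (X n) ^ (k - 1 - j)) 0 :=
            fun k => vge_sum _ _ 0 fun j _ =>
              ((vge_pow0 hXu0 j).mul (vge_pow0 hVXn0 _)).mono (by norm_num)
          refine Vge.sub (Vge.sub ?_ ?_) ?_
          · refine vge_sum _ _ _ fun i _ => ?_
            refine ((hVCi i).mul ((hgsv _).mul hVu)).mono ?_
            push_cast
            linarith
          · have hgs1v : Vge (∑ j ∈ Finset.range (p - 1), (X n) ^ j) 0 :=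
              vge_sum _ _ 0 fun j _ => vge_pow0 hVXn0 j
            refine (((vge_natCast p).mul (hgs1v.mul h1)).mul hVu).mono ?_
            push_cast
            linarith
          · refine ((hVu.pow 2).mul hR0).mono ?_
            push_cast
            nlinarith [mul_nonneg hcst hε.le]
  have hVX0' : ∀ n, Vge (X n) 0 := by
    intro n
    rw [show X n = (X n - 1) + 1 by ring]
    exact ((hinv n).2.1.mono hε.le).add vge_one
  -- the approximations stabilize
  have hdiff : ∀ m n, m ≤ n → Vge (X n - X m) (((m : ℝ) + 1) * ε) := by
    intro m n hmn
    induction n, hmn using Nat.le_induction with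
    | base => rw [sub_self]; exact vge_zero _
    | succ n hmn ih =>
        have h : X (n + 1) - X m = (X n - X m) + HahnSeries.C (p : K)⁻¹ * Er Ci (X n) := by
          rw [hXs]; ring
        rw [h]
        refine ih.add (((vge_C _).mul (hinv n).2.2).mono ?_)
        have hmn' : (m : ℝ) ≤ (n : ℝ) := Nat.cast_le.2 hmn
        nlinarith
  have agree : ∀ (m n : ℕ) (g : ℝ), g < ((m : ℝ) + 1) * ε → g < ((n : ℝ) + 1) * ε →
      (X m).coeff g = (X n).coeff g := by
    intro m n g hm hn
    rcases le_total m n with h | h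
    · have h0 := hdiff m n h g hm
      rw [HahnSeries.coeff_sub, sub_eq_zero] at h0
      exact h0.symm
    · have h0 := hdiff n m h g hn
      rw [HahnSeries.coeff_sub, sub_eq_zero] at h0
      exact h0
  set N : ℝ → ℕ := fun g => ⌈max g 0 / ε⌉₊ with hNdef
  have hNbound : ∀ g C : ℝ, g ≤ C → g < ((N C : ℝ) + 1) * ε := by
    intro g C hgC
    have h1 : max C 0 / ε ≤ (N C : ℝ) := Nat.le_ceil _
    have h2 : max C 0 ≤ (N C : ℝ) * ε := by
      rw [div_le_iff₀ hε] at h1; exact h1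
    have h3 : C ≤ max C 0 := le_max_left C 0
    nlinarith
  set x : ℝ → K := fun g => (X (N g)).coeff g with hxdef
  have hstab : ∀ (n : ℕ) (g : ℝ), g < ((n : ℝ) + 1) * ε → x g = (X n).coeff g := fun n g hg =>
    agree (N g) n g (hNbound g g le_rfl) hg
  have hNovx : NovFin x := by
    intro C
    apply ((hinv (N C)).1 C).subset
    rintro g ⟨hg, hgC⟩
    refine ⟨?_, hgC⟩
    rw [← hstab (N C) g (hNbound g C hgC.le)]
    exact hg
  refine ⟨toH x hNovx, hNovx, ?_⟩
  set Y := toH x hNovx with hYdef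
  have hD : ∀ n : ℕ, Vge (Y - X n) (((n : ℝ) + 1) * ε) := by
    intro n h hh
    rw [HahnSeries.coeff_sub, show Y.coeff h = x h from rfl, hstab n h hh, sub_self]
  have hVY0 : Vge Y 0 := by
    rw [show Y = (Y - X 0) + X 0 by ring]
    exact (((hD 0).mono (by nlinarith)).add (hVX0' 0))
  have hkeyv : ∀ n : ℕ, Vge (Y ^ p - (1 + Hh Ci Y)) (((n : ℝ) + 1) * ε) := by
    intro n
    have hident : Y ^ p - (1 + Hh Ci Y) =
        -(Er Ci (X n)) + (((∑ j ∈ Finset.range p, Y ^ j * (X n) ^ (p - 1 - j)) * (Y - X n))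
          - (∑ i : Fin p, Ci i *
              ((∑ j ∈ Finset.range (i : ℕ), Y ^ j * (X n) ^ ((i : ℕ) - 1 - j)) * (Y - X n)))) := by
      have h1 := geom_sum₂_mul Y (X n) p
      have h2 : ∀ i : Fin p, Ci i *
          ((∑ j ∈ Finset.range (i : ℕ), Y ^ j * (X n) ^ ((i : ℕ) - 1 - j)) * (Y - X n))
            = Ci i * Y ^ (i : ℕ) - Ci i * (X n) ^ (i : ℕ) := by
        intro i; rw [geom_sum₂_mul]; ring
      rw [show Hh Ci Y = ∑ i : Fin p, Ci i * Y ^ (i : ℕ) from rfl]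
      rw [hErEq, h1, Finset.sum_congr rfl fun i _ => h2 i, Finset.sum_sub_distrib]
      ring
    rw [hident]
    refine ((hinv n).2.2.neg).add (Vge.sub ?_ ?_)
    · refine ((vge_sum _ _ 0 fun j _ =>
        ((vge_pow0 hVY0 _).mul (vge_pow0 (hVX0' n) _)).mono (by norm_num)).mul (hD n)).mono ?_
      linarith
    · refine vge_sum _ _ _ fun i _ => ?_
      refine ((hVCi i).mul ((vge_sum _ _ 0 fun j _ =>
        ((vge_pow0 hVY0 _).mul (vge_pow0 (hVX0' n) _)).mono (by norm_num)).mul (hD n))).mono ?_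
      linarith
  have hzero : Y ^ p - (1 + Hh Ci Y) = 0 := by
    rw [← HahnSeries.coeff_fun_eq_zero_iff]
    funext g
    exact hkeyv (N g) g (hNbound g g le_rfl)
  have hfin : Y ^ p = 1 + Hh Ci Y := sub_eq_zero.mp hzero
  rw [show Hh Ci Y = ∑ i : Fin p, Ci i * Y ^ (i : ℕ) from rfl] at hfin
  exact hfin


theorem novMul_eq (x y : HahnSeries ℝ K) (g : ℝ) :
    novMul x.coeff y.coeff g = (x * y).coeff g := by
  classical
  rw [HahnSeries.coeff_mul]
  have hinj : ∀ a ∈ Finset.addAntidiagonal x.isPWO_support y.isPWO_support g,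
      ∀ b ∈ Finset.addAntidiagonal x.isPWO_support y.isPWO_support g,
      Prod.fst a = Prod.fst b → a = b := by
    intro a ha b hb hab
    obtain ⟨-, -, ha3⟩ := Finset.mem_addAntidiagonal.1 ha
    obtain ⟨-, -, hb3⟩ := Finset.mem_addAntidiagonal.1 hb
    have : a.2 = b.2 := by
      have : a.1 + a.2 = b.1 + b.2 := by rw [ha3, hb3]
      rw [hab] at this
      linarith
    exact Prod.ext hab this
  have hsupp : (Function.support fun h : ℝ => x.coeff h * y.coeff (g - h)) ⊆
      ↑((Finset.addAntidiagonal x.isPWO_support y.isPWO_support g).image Prod.fst) := by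
    intro h hh
    rw [Function.mem_support] at hh
    refine Finset.mem_coe.2 (Finset.mem_image.2 ⟨(h, g - h), Finset.mem_addAntidiagonal.2
      ⟨?_, ?_, by ring⟩, rfl⟩)
    · exact (HahnSeries.mem_support _ _).2 (left_ne_zero_of_mul hh)
    · exact (HahnSeries.mem_support _ _).2 (right_ne_zero_of_mul hh)
  show (∑ᶠ h : ℝ, x.coeff h * y.coeff (g - h)) = _
  rw [finsum_eq_finset_sum_of_support_subset _ hsupp, Finset.sum_image hinj]
  refine Finset.sum_congr rfl fun ij hij => ?_
  obtain ⟨-, -, hsum⟩ := Finset.mem_addAntidiagonal.1 hij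
  rw [show g - ij.1 = ij.2 from by linarith]

theorem novPow_eq (x : HahnSeries ℝ K) : ∀ n : ℕ, novPow x.coeff n = (x ^ n).coeff
  | 0 => by
      funext g
      show novOne g = (x ^ 0).coeff g
      rw [pow_zero, HahnSeries.coeff_one]
      rfl
  | n + 1 => by
      show novMul x.coeff (novPow x.coeff n) = _
      rw [novPow_eq x n]
      funext g
      rw [novMul_eq x (x ^ n) g, ← pow_succ']

theorem no_sol (p : ℕ) (hp : p.Prime) (ξ : K) (q : ℕ)
    (hξq : ξ ^ q ≠ 0) (hKq : ∀ y : K, y ^ p = ξ ^ q → p ∣ q) (hq : ¬ p ∣ q)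
    (c : Fin p → ℝ → K) (hc : ∀ i, NovFin (c i))
    (hcpos : ∀ (i : Fin p) (g : ℝ), c i g ≠ 0 → 0 < g) :
    ¬ ∃ X : HahnSeries ℝ K,
      X ^ p = HahnSeries.single (0 : ℝ) (ξ ^ q)
        + ∑ i : Fin p, toH (c i) (hc i) * X ^ (i : ℕ) := by
  rintro ⟨X, hX⟩
  classical
  set Ci : Fin p → HahnSeries ℝ K := fun i => toH (c i) (hc i) with hCi
  have hVCi0 : ∀ i, Vge (Ci i) 0 := by
    intro i h hh
    by_contra hne
    exact absurd (hcpos i h hne) (by linarith)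
  have hc0 : ∀ i, (Ci i).coeff 0 = 0 := by
    intro i
    by_contra hne
    exact absurd (hcpos i 0 hne) (lt_irrefl 0)
  by_cases hX0 : X = 0
  · rw [hX0] at hX
    have h0 := congrArg (fun z : HahnSeries ℝ K => z.coeff 0) hX
    rw [zero_pow hp.ne_zero, HahnSeries.coeff_add, HahnSeries.coeff_single_same,
      coeff_sum] at h0
    have hterm : ∀ i : Fin p, ((Ci i) * (0 : HahnSeries ℝ K) ^ (i : ℕ)).coeff 0 = 0 := by
      intro i
      by_cases hi : (i : ℕ) = 0
      · rw [hi, pow_zero, mul_one]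
        exact hc0 i
      · rw [zero_pow hi, mul_zero]
        rfl
    rw [Finset.sum_eq_zero fun i _ => hterm i, add_zero] at h0
    exact hξq (by rw [← h0]; rfl)
  · have hne := HahnSeries.support_nonempty_iff.2 hX0
    have hdmem : X.coeff (X.isWF_support.min hne) ≠ 0 := by
      have := X.isWF_support.min_mem hne
      rwa [HahnSeries.mem_support] at this
    set d := X.isWF_support.min hne with hd
    have hVX : Vge X d := by
      intro h hh
      by_contra hne2
      exact (Set.IsWF.not_lt_min _ _ ((HahnSeries.mem_support _ _).2 hne2)) hh
    have hppos : (0 : ℝ) < (p : ℝ) := by exact_mod_cast hp.pos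
    rcases lt_or_ge d 0 with hdneg | hdpos
    · have h0 := congrArg (fun z : HahnSeries ℝ K => z.coeff ((p : ℝ) * d)) hX
      have hterm : ∀ i : Fin p, ((Ci i) * X ^ (i : ℕ)).coeff ((p : ℝ) * d) = 0 := by
        intro i
        refine ((hVCi0 i).mul (hVX.pow (i : ℕ))) _ ?_
        have h1 : ((i : ℕ) : ℝ) < (p : ℝ) := by exact_mod_cast i.isLt
        nlinarith
      rw [coeff_pow_of_vge hVX p, HahnSeries.coeff_add, coeff_sum,
        HahnSeries.coeff_single_of_ne (by nlinarith : (p : ℝ) * d ≠ 0),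
        Finset.sum_eq_zero fun i _ => hterm i, add_zero] at h0
      exact hdmem (pow_eq_zero_iff hp.ne_zero |>.1 h0)
    · have hVX0 : Vge X 0 := hVX.mono hdpos
      have h0 := congrArg (fun z : HahnSeries ℝ K => z.coeff 0) hX
      have hterm : ∀ i : Fin p, ((Ci i) * X ^ (i : ℕ)).coeff 0 = 0 := by
        intro i
        have h := coeff_mul_of_vge (hVCi0 i) (vge_pow0 hVX0 (i : ℕ))
        rw [add_zero] at h
        rw [h, hc0 i, zero_mul]
      rw [HahnSeries.coeff_add, coeff_sum, HahnSeries.coeff_single_same,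
        Finset.sum_eq_zero fun i _ => hterm i, add_zero] at h0
      rcases eq_or_lt_of_le hdpos with hd0 | hdpos'
      · have hpow := coeff_pow_of_vge hVX p
        rw [← hd0, mul_zero] at hpow
        rw [hpow] at h0
        exact hq (hKq _ h0)
      · have hz : (X ^ p).coeff 0 = 0 := (hVX.pow p) 0 (by nlinarith)
        rw [hz] at h0
        exact hξq h0.symm


end NovAux

/-- Let `K` satisfy the irreducible condition for the prime `p` and let
`h(x) = ∑_{i<p} cᵢ xⁱ` be a polynomial of degree `< p` whose coefficients are Novikov
series of strictly positive valuation. Then `x ^ p = 1 + h(x)` has a solution in the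
universal Novikov field, while for any `q` not divisible by `p` the equation
`x ^ p = ξ_p ^ q + h(x)` has no solution. -/
theorem perturbed_root_equations
    {K : Type*} [Field K] (p : ℕ) (hp : p.Prime)
    (hchar : (p : K) ≠ 0)
    (hroots : ∃ ζ : K, IsPrimitiveRoot ζ p)
    (hK : ∀ (ξ : K), IsPrimitiveRoot ξ p → ∀ (x : K) (q : ℕ), x ^ p = ξ ^ q → p ∣ q)
    -- the coefficients of `h`: Novikov series of strictly positive valuation
    (c : Fin p → ℝ → K)
    (hc : ∀ i, IsNovikov (⊤ : AddSubgroup ℝ) (c i))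
    (hcpos : ∀ (i : Fin p) (g : ℝ), c i g ≠ 0 → 0 < g) :
    (∃ x : ℝ → K, IsNovikov (⊤ : AddSubgroup ℝ) x ∧
        novPow x p = fun g : ℝ =>
          novOne (K := K) g + ∑ i : Fin p, novMul (c i) (novPow x (i : ℕ)) g) ∧
    (∀ (ξ : K), IsPrimitiveRoot ξ p → ∀ q : ℕ, ¬ p ∣ q →
      ¬ ∃ x : ℝ → K, IsNovikov (⊤ : AddSubgroup ℝ) x ∧
          novPow x p = fun g : ℝ =>
            (if g = 0 then ξ ^ q else 0) + ∑ i : Fin p, novMul (c i) (novPow x (i : ℕ)) g) := by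
  classical
  have hc' : ∀ i, NovAux.NovFin (c i) := fun i => (hc i).2
  constructor
  · obtain ⟨X, hXN, hXeq⟩ := NovAux.exists_sol p hp hchar c hc' hcpos
    refine ⟨X.coeff, ⟨fun _ _ => trivial, hXN⟩, ?_⟩
    funext g
    calc novPow X.coeff p g = (X ^ p).coeff g := congrFun (NovAux.novPow_eq X p) g
      _ = ((1 : HahnSeries ℝ K)
            + ∑ i : Fin p, NovAux.toH (c i) (hc' i) * X ^ (i : ℕ)).coeff g := by rw [hXeq]
      _ = novOne g + ∑ i : Fin p, novMul (c i) (novPow X.coeff (i : ℕ)) g := by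
          rw [HahnSeries.coeff_add, NovAux.coeff_sum]
          congr 1
          · rw [HahnSeries.coeff_one]; rfl
          · refine Finset.sum_congr rfl fun i _ => ?_
            rw [NovAux.novPow_eq X (i : ℕ)]
            exact (NovAux.novMul_eq (NovAux.toH (c i) (hc' i)) (X ^ (i : ℕ)) g).symm
  · rintro ξ hξ q hq ⟨x, hxN, heq⟩
    have hNx : NovAux.NovFin x := hxN.2
    set X := NovAux.toH x hNx with hXd
    have hXeq : X ^ p = HahnSeries.single (0 : ℝ) (ξ ^ q)
        + ∑ i : Fin p, NovAux.toH (c i) (hc' i) * X ^ (i : ℕ) := by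
      apply HahnSeries.coeff_injective
      funext g
      calc (X ^ p).coeff g = novPow x p g := (congrFun (NovAux.novPow_eq X p) g).symm
        _ = (if g = 0 then ξ ^ q else 0)
              + ∑ i : Fin p, novMul (c i) (novPow x (i : ℕ)) g := congrFun heq g
        _ = (HahnSeries.single (0 : ℝ) (ξ ^ q)
              + ∑ i : Fin p, NovAux.toH (c i) (hc' i) * X ^ (i : ℕ)).coeff g := by
            rw [HahnSeries.coeff_add, NovAux.coeff_sum]
            congr 1
            · rw [HahnSeries.coeff_single]
            · refine Finset.sum_congr rfl fun i _ => ?_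
              show novMul (c i) (novPow X.coeff (i : ℕ)) g = _
              rw [NovAux.novPow_eq X (i : ℕ)]
              exact NovAux.novMul_eq (NovAux.toH (c i) (hc' i)) (X ^ (i : ℕ)) g
    exact NovAux.no_sol p hp ξ q (pow_ne_zero q (hξ.ne_zero hp.ne_zero))
      (fun y hy => hK ξ hξ y q hy) hq c hc' hcpos ⟨X, hXeq⟩
end

section
/- Let A : (V₁, ℓ₁) → (V₂, ℓ₂) be a nonzero Λ-linear map between finite-dimensional filtered Novikov vector spaces. Then there exists a nonzero y* ∈ V₁ maximizing the filtration shift: ℓ₂(A y*) − ℓ₁(y*) ≥ ℓ₂(A y) − ℓ₁(y) for all nonzero y ∈ V₁. Moreover y* can be chosen to be an element of an orthogonal basis of V₁ extending an orthogonal basis of ker A. -/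
open scoped BigOperators

/-- Cancellation of a real shift in `EReal` subtraction. -/
lemma my_ereal_cancel (t : ℝ) (a b : EReal) : (a - t) - (b - t) = a - b := by
  rw [sub_eq_add_neg b, sub_eq_add_neg _ (b + -(t:EReal)), EReal.neg_add (by simp) (by simp),
    sub_eq_add_neg a, sub_eq_add_neg a, sub_eq_add_neg (-b), neg_neg]
  rw [add_assoc, add_comm (-(t:EReal)), add_assoc, ← EReal.coe_neg, ← EReal.coe_add]
  norm_num

/-- A filtration function is bounded on sums by the sup of the values. -/
lemma ell_sum_le {Λ V ι : Type*} [Field Λ] [AddCommGroup V] [Module Λ V]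
    (ℓ : V → EReal) (hzero : ℓ 0 = ⊥)
    (hadd : ∀ x y : V, ℓ (x + y) ≤ max (ℓ x) (ℓ y))
    (s : Finset ι) (f : ι → V) :
    ℓ (∑ i ∈ s, f i) ≤ s.sup fun i => ℓ (f i) := by
  classical
  induction s using Finset.cons_induction with
  | empty => simp [hzero]
  | cons a s ha ih =>
    rw [Finset.sum_cons, Finset.sup_cons]
    exact (hadd _ _).trans (max_le_max le_rfl ih)

/-- Replacing a basis vector by a combination with nonzero coefficient there yields a basis. -/
lemma exists_basis_update {Λ V : Type*} [Field Λ] [AddCommGroup V] [Module Λ V]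
    [FiniteDimensional Λ V] {n : ℕ} (v : Module.Basis (Fin n) Λ V) (c : Fin n → Λ)
    (j : Fin n) (hcj : c j ≠ 0) :
    ∃ b : Module.Basis (Fin n) Λ V, ⇑b = Function.update (⇑v) j (∑ i, c i • v i) := by
  classical
  set w := ∑ i, c i • v i with hw
  set u := Function.update (⇑v) j w with hu
  have hspan : ⊤ ≤ Submodule.span Λ (Set.range u) := by
    rw [← v.span_eq]
    refine Submodule.span_le.2 ?_
    rintro x ⟨i, rfl⟩
    by_cases hij : i = j
    · subst hij
      have h1 : w ∈ Submodule.span Λ (Set.range u) :=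
        Submodule.subset_span ⟨i, by rw [hu, Function.update_self]⟩
      have h2 : ∑ k ∈ Finset.univ.erase i, c k • v k ∈ Submodule.span Λ (Set.range u) := by
        refine Submodule.sum_mem _ fun k hk => Submodule.smul_mem _ _ ?_
        exact Submodule.subset_span ⟨k, by
          rw [hu, Function.update_of_ne (Finset.mem_erase.1 hk).1]⟩
      have h3 : c i • v i = w - ∑ k ∈ Finset.univ.erase i, c k • v k := by
        rw [hw, ← Finset.sum_erase_add _ _ (Finset.mem_univ i)]; abel
      have h4 : v i = (c i)⁻¹ • (c i • v i) := by
        rw [smul_smul, inv_mul_cancel₀ hcj, one_smul]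
      rw [h4, h3]
      exact Submodule.smul_mem _ _ (Submodule.sub_mem _ h1 h2)
    · exact Submodule.subset_span ⟨i, by rw [hu, Function.update_of_ne hij]⟩
  have hcard : Fintype.card (Fin n) = Module.finrank Λ V := by
    simp [Module.finrank_eq_card_basis v]
  exact ⟨basisOfTopLeSpanOfCardEqFinrank u hspan hcard,
    coe_basisOfTopLeSpanOfCardEqFinrank u hspan hcard⟩

/-- The replacement lemma: replacing a basis vector `v j` by `w = ∑ cᵢ vᵢ` where the
`j`-th term attains the maximal filtration level preserves orthogonality. -/
lemma replace_orth {Λ V : Type*} [Field Λ] [AddCommGroup V] [Module Λ V]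
    (ν : Λ → ℝ) (ℓ : V → EReal)
    (hzero : ℓ 0 = ⊥)
    (hsmul : ∀ (c : Λ) (x : V), c ≠ 0 → ℓ (c • x) = ℓ x - (ν c : EReal))
    (hadd : ∀ x y : V, ℓ (x + y) ≤ max (ℓ x) (ℓ y))
    (hneg : ∀ x : V, ℓ (-x) = ℓ x)
    {n : ℕ} (v : Fin n → V) (hv : IsOrthogonal Λ ℓ v)
    (c : Fin n → Λ) (j : Fin n) (hcj : c j ≠ 0)
    (hmax : ∀ i, ℓ (c i • v i) ≤ ℓ (c j • v j)) :
    IsOrthogonal Λ ℓ (Function.update v j (∑ i, c i • v i)) := by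
  classical
  intro d
  set w := ∑ i, c i • v i with hw
  set u := Function.update v j w with hu
  have huj : u j = w := by rw [hu, Function.update_self]
  have hui : ∀ i, i ≠ j → u i = v i := fun i hi => by rw [hu, Function.update_of_ne hi]
  set e : Fin n → Λ := fun i => if i = j then d j * c j else d i + d j * c i with he
  have hej : e j = d j * c j := by rw [he]; simp
  have hei : ∀ i, i ≠ j → e i = d i + d j * c i := fun i hi => by rw [he]; simp [hi]
  -- the level of w is that of its j-th term
  have hℓw : ℓ w = ℓ (c j • v j) := by
    rw [hw, hv c]
    exact le_antisymm (Finset.sup_le fun i _ => hmax i)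
      (Finset.le_sup (f := fun i => ℓ (c i • v i)) (Finset.mem_univ j))
  have hsw : ∀ a : Λ, ℓ (a • w) = ℓ ((a * c j) • v j) := by
    intro a
    by_cases ha : a = 0
    · simp [ha]
    · rw [hsmul a w ha, hℓw, ← hsmul a _ ha, smul_smul]
  have hkey : ∀ (a : Λ) (i : Fin n), ℓ ((a * c i) • v i) ≤ ℓ ((a * c j) • v j) := by
    intro a i
    by_cases ha : a = 0
    · simp [ha, hzero]
    · rw [← smul_smul, ← smul_smul, hsmul a _ ha, hsmul a _ ha]
      exact EReal.sub_le_sub (hmax i) le_rfl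
  -- key sum identity
  have hsum : ∑ i, d i • u i = ∑ i, e i • v i := by
    have h1 : ∑ i, d i • u i = ∑ i ∈ Finset.univ.erase j, d i • v i + d j • w := by
      rw [← Finset.sum_erase_add _ (fun i => d i • u i) (Finset.mem_univ j), huj]
      congr 1
      exact Finset.sum_congr rfl fun i hi => by rw [hui i (Finset.mem_erase.1 hi).1]
    have h2 : ∑ i, e i • v i =
        ∑ i ∈ Finset.univ.erase j, (d i • v i + d j • (c i • v i)) + (d j * c j) • v j := by
      rw [← Finset.sum_erase_add _ (fun i => e i • v i) (Finset.mem_univ j), hej]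
      congr 1
      refine Finset.sum_congr rfl fun i hi => ?_
      rw [hei i (Finset.mem_erase.1 hi).1, add_smul, mul_smul]
    have h3 : d j • w = ∑ i ∈ Finset.univ.erase j, d j • (c i • v i) + (d j * c j) • v j := by
      rw [hw, Finset.smul_sum, ← Finset.sum_erase_add _ _ (Finset.mem_univ j), smul_smul]
    rw [h1, h2, h3, Finset.sum_add_distrib]
    abel
  rw [hsum, hv e]
  apply le_antisymm
  · refine Finset.sup_le fun i _ => ?_
    by_cases hij : i = j
    · subst hij
      have : ℓ (e i • v i) = ℓ (d i • u i) := by rw [hej, huj, hsw]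
      exact this.le.trans (Finset.le_sup (f := fun k => ℓ (d k • u k)) (Finset.mem_univ i))
    · have hdecomp : e i • v i = d i • u i + (d j * c i) • v i := by
        rw [hui i hij, hei i hij, add_smul, mul_smul]
      calc ℓ (e i • v i) ≤ max (ℓ (d i • u i)) (ℓ ((d j * c i) • v i)) :=
            hdecomp ▸ hadd _ _
        _ ≤ max (ℓ (d i • u i)) (ℓ (d j • u j)) := by
            refine max_le_max le_rfl ?_
            calc ℓ ((d j * c i) • v i) ≤ ℓ ((d j * c j) • v j) := hkey (d j) i
              _ = ℓ (d j • u j) := by rw [huj, hsw]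
        _ ≤ _ := max_le (Finset.le_sup (f := fun k => ℓ (d k • u k)) (Finset.mem_univ i))
            (Finset.le_sup (f := fun k => ℓ (d k • u k)) (Finset.mem_univ j))
  · refine Finset.sup_le fun i _ => ?_
    by_cases hij : i = j
    · subst hij
      have : ℓ (d i • u i) = ℓ (e i • v i) := by rw [hej, huj, hsw]
      exact this.le.trans (Finset.le_sup (f := fun k => ℓ (e k • v k)) (Finset.mem_univ i))
    · have hdecomp : d i • u i = e i • v i + (-(d j * c i)) • v i := by
        rw [hui i hij, hei i hij, ← add_smul]
        congr 1
        ring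
      calc ℓ (d i • u i) ≤ max (ℓ (e i • v i)) (ℓ ((-(d j * c i)) • v i)) :=
            hdecomp ▸ hadd _ _
        _ ≤ max (ℓ (e i • v i)) (ℓ (e j • v j)) := by
            refine max_le_max le_rfl ?_
            rw [neg_smul, hneg, hej]
            exact hkey (d j) i
        _ ≤ _ := max_le (Finset.le_sup (f := fun k => ℓ (e k • v k)) (Finset.mem_univ i))
            (Finset.le_sup (f := fun k => ℓ (e k • v k)) (Finset.mem_univ j))

/-- Any subspace admits an orthogonal basis of the ambient space adapted to it. -/
lemma extend_orth {Λ V : Type*} [Field Λ] [AddCommGroup V] [Module Λ V]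
    [FiniteDimensional Λ V] (ν : Λ → ℝ) (ℓ : V → EReal)
    (hzero : ℓ 0 = ⊥)
    (hsmul : ∀ (c : Λ) (x : V), c ≠ 0 → ℓ (c • x) = ℓ x - (ν c : EReal))
    (hadd : ∀ x y : V, ℓ (x + y) ≤ max (ℓ x) (ℓ y))
    (hneg : ∀ x : V, ℓ (-x) = ℓ x)
    {n : ℕ} (W : Submodule Λ V) :
    ∀ (m : ℕ) (v : Module.Basis (Fin n) Λ V), IsOrthogonal Λ ℓ ⇑v →
      ∀ S : Finset (Fin n), (∀ i ∈ S, v i ∈ W) →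
      Module.finrank Λ W = S.card + m →
      ∃ (b : Module.Basis (Fin n) Λ V) (S' : Finset (Fin n)),
        IsOrthogonal Λ ℓ ⇑b ∧ Submodule.span Λ (⇑b '' ↑S') = W := by
  classical
  intro m
  induction m with
  | zero =>
    intro v hv S hS hm
    refine ⟨v, S, hv, ?_⟩
    have hle : Submodule.span Λ (⇑v '' ↑S) ≤ W :=
      Submodule.span_le.2 (by rintro x ⟨i, hi, rfl⟩; exact hS i (by simpa using hi))
    refine Submodule.eq_of_le_of_finrank_le hle ?_
    have hli : LinearIndependent Λ (fun i : S => v i) :=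
      v.linearIndependent.comp _ Subtype.val_injective
    have hfr : Module.finrank Λ (Submodule.span Λ (Set.range fun i : S => v i)) = S.card := by
      rw [finrank_span_eq_card hli, Fintype.card_coe]
    have hrange : (Set.range fun i : S => v i) = ⇑v '' ↑S := by
      ext x; simp
    rw [hrange] at hfr
    rw [hfr, hm]
    omega
  | succ m ih =>
    intro v hv S hS hm
    have hle : Submodule.span Λ (⇑v '' ↑S) ≤ W :=
      Submodule.span_le.2 (by rintro x ⟨i, hi, rfl⟩; exact hS i (by simpa using hi))
    have hli : LinearIndependent Λ (fun i : S => v i) :=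
      v.linearIndependent.comp _ Subtype.val_injective
    have hfr : Module.finrank Λ (Submodule.span Λ (Set.range fun i : S => v i)) = S.card := by
      rw [finrank_span_eq_card hli, Fintype.card_coe]
    have hrange : (Set.range fun i : S => v i) = ⇑v '' ↑S := by
      ext x; simp
    rw [hrange] at hfr
    have hne : Submodule.span Λ (⇑v '' ↑S) ≠ W := by
      intro h
      rw [h, hm] at hfr
      omega
    obtain ⟨w, hwW, hwspan⟩ := SetLike.exists_of_lt (hle.lt_of_ne hne)
    set c : Fin n → Λ := fun i => if i ∈ S then 0 else v.repr w i with hc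
    set w' := ∑ i, c i • v i with hw'def
    have hw' : w' = w - ∑ i ∈ S, v.repr w i • v i := by
      have hsplit : ∑ i, v.repr w i • v i = w := v.sum_repr w
      calc w' = ∑ i, (v.repr w i • v i - (if i ∈ S then v.repr w i • v i else 0)) := by
            rw [hw'def]
            refine Finset.sum_congr rfl fun i _ => ?_
            by_cases hi : i ∈ S <;> simp [hc, hi]
        _ = w - ∑ i ∈ S, v.repr w i • v i := by
            rw [Finset.sum_sub_distrib, hsplit]
            congr 1
            simp [Finset.sum_ite_mem]
    have hw'W : w' ∈ W := by
      rw [hw']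
      exact W.sub_mem hwW (Submodule.sum_mem _ fun i hi => W.smul_mem _ (hS i hi))
    have hw'ne : w' ≠ 0 := by
      intro h0
      apply hwspan
      have : w = ∑ i ∈ S, v.repr w i • v i := by
        rw [hw'] at h0
        exact (sub_eq_zero.1 h0)
      rw [this]
      exact Submodule.sum_mem _ fun i hi => Submodule.smul_mem _ _
        (Submodule.subset_span ⟨i, by simpa using hi, rfl⟩)
    have hcex : ∃ i, c i ≠ 0 := by
      by_contra h
      push_neg at h
      apply hw'ne
      rw [hw'def]
      exact Finset.sum_eq_zero fun i _ => by rw [h i, zero_smul]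
    obtain ⟨i₀, hi₀⟩ := hcex
    set supp := Finset.univ.filter (fun i => c i ≠ 0) with hsupp
    have hsne : supp.Nonempty := ⟨i₀, Finset.mem_filter.2 ⟨Finset.mem_univ _, hi₀⟩⟩
    obtain ⟨j, hjs, hjsup⟩ := supp.exists_mem_eq_sup hsne (fun i => ℓ (c i • v i))
    have hcj : c j ≠ 0 := by
      have := Finset.mem_filter.1 (hsupp ▸ hjs)
      exact this.2
    have hjS : j ∉ S := fun h => hcj (by simp [hc, h])
    have hmax : ∀ i, ℓ (c i • v i) ≤ ℓ (c j • v j) := by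
      intro i
      by_cases hi : c i = 0
      · simp [hi, hzero]
      · exact (Finset.le_sup (f := fun k => ℓ (c k • v k))
          (Finset.mem_filter.2 ⟨Finset.mem_univ _, hi⟩)).trans hjsup.le
    obtain ⟨b, hb⟩ := exists_basis_update v c j hcj
    have hborth : IsOrthogonal Λ ℓ ⇑b := by
      rw [hb]
      exact replace_orth ν ℓ hzero hsmul hadd hneg ⇑v hv c j hcj hmax
    have hbj : b j = w' := by
      rw [show b j = Function.update (⇑v) j (∑ i, c i • v i) j from congrFun hb j,
        Function.update_self, hw'def]
    have hbi : ∀ i, i ≠ j → b i = v i := fun i hi => by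
      rw [show b i = Function.update (⇑v) j (∑ k, c k • v k) i from congrFun hb i,
        Function.update_of_ne hi]
    refine ih b hborth (insert j S) ?_ ?_
    · intro i hi
      rcases Finset.mem_insert.1 hi with rfl | hiS
      · rw [hbj]; exact hw'W
      · rw [hbi i (fun h => hjS (h ▸ hiS))]
        exact hS i hiS
    · rw [Finset.card_insert_of_notMem hjS]
      omega

/-- A nonzero linear map `A : (V₁, ℓ₁) → (V₂, ℓ₂)` between
finite-dimensional filtered Novikov spaces admits a nonzero `y*` maximizing the filtration
shift `ℓ₂(Ay) − ℓ₁(y)`; moreover `y*` may be taken to be a member of an orthogonal basis of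
`V₁` extending an orthogonal basis of `ker A`. -/
theorem exists_filtration_optimal_element
    {Λ V₁ V₂ : Type*} [Field Λ]
    [AddCommGroup V₁] [Module Λ V₁] [FiniteDimensional Λ V₁]
    [AddCommGroup V₂] [Module Λ V₂] [FiniteDimensional Λ V₂]
    (ν : Λ → ℝ) (ℓ₁ : V₁ → EReal) (ℓ₂ : V₂ → EReal)
    (hzero₁ : ℓ₁ 0 = ⊥)
    (hsmul₁ : ∀ (c : Λ) (x : V₁), c ≠ 0 → ℓ₁ (c • x) = ℓ₁ x - (ν c : EReal))
    (hadd₁ : ∀ x y : V₁, ℓ₁ (x + y) ≤ max (ℓ₁ x) (ℓ₁ y))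
    (hneg₁ : ∀ x : V₁, ℓ₁ (-x) = ℓ₁ x)
    (hzero₂ : ℓ₂ 0 = ⊥)
    (hsmul₂ : ∀ (c : Λ) (x : V₂), c ≠ 0 → ℓ₂ (c • x) = ℓ₂ x - (ν c : EReal))
    (hadd₂ : ∀ x y : V₂, ℓ₂ (x + y) ≤ max (ℓ₂ x) (ℓ₂ y))
    (hneg₂ : ∀ x : V₂, ℓ₂ (-x) = ℓ₂ x)
    -- orthogonalizability of `V₁` and `V₂`
    (n₁ : ℕ) (b₁ : Module.Basis (Fin n₁) Λ V₁) (hb₁ : IsOrthogonal Λ ℓ₁ b₁)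
    (n₂ : ℕ) (b₂ : Module.Basis (Fin n₂) Λ V₂) (hb₂ : IsOrthogonal Λ ℓ₂ b₂)
    (A : V₁ →ₗ[Λ] V₂) (hA : A ≠ 0) :
    ∃ (n : ℕ) (b : Module.Basis (Fin n) Λ V₁) (S : Set (Fin n)) (i : Fin n),
      IsOrthogonal Λ ℓ₁ b ∧
      Submodule.span Λ (⇑b '' S) = LinearMap.ker A ∧
      b i ≠ 0 ∧
      ∀ y : V₁, y ≠ 0 → ℓ₂ (A y) - ℓ₁ y ≤ ℓ₂ (A (b i)) - ℓ₁ (b i) := by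
  classical
  obtain ⟨b, S', hborth, hbspan⟩ := extend_orth ν ℓ₁ hzero₁ hsmul₁ hadd₁ hneg₁
    (LinearMap.ker A) (Module.finrank Λ (LinearMap.ker A)) b₁ hb₁ ∅ (by simp) (by simp)
  obtain ⟨x, hx⟩ : ∃ x, A x ≠ 0 := by
    by_contra h
    push_neg at h
    exact hA (LinearMap.ext fun x => by simpa using h x)
  have hxne : x ≠ 0 := fun h => hx (by simp [h])
  have hn : 0 < n₁ := by
    rcases Nat.eq_zero_or_pos n₁ with h0 | h
    · exfalso
      apply hxne
      subst h0
      calc x = ∑ i : Fin 0, b.repr x i • b i := (b.sum_repr x).symm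
        _ = 0 := by simp
    · exact h
  have huniv : (Finset.univ : Finset (Fin n₁)).Nonempty := by
    have : Nonempty (Fin n₁) := Fin.pos_iff_nonempty.1 hn
    exact Finset.univ_nonempty
  obtain ⟨i, _, hisup⟩ := Finset.univ.exists_mem_eq_sup huniv
    (fun k => ℓ₂ (A (b k)) - ℓ₁ (b k))
  refine ⟨n₁, b, ↑S', i, hborth, hbspan, b.ne_zero i, ?_⟩
  intro y hy
  set c : Fin n₁ → Λ := fun k => b.repr y k with hc
  have hyrepr : ∑ k, c k • b k = y := b.sum_repr y
  have hAy : A y = ∑ k, c k • A (b k) := by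
    rw [← hyrepr, map_sum]
    exact Finset.sum_congr rfl fun k _ => A.map_smul (c k) (b k)
  have h1 : ℓ₂ (A y) ≤ Finset.univ.sup fun k => ℓ₂ (c k • A (b k)) := by
    rw [hAy]
    exact ell_sum_le (Λ := Λ) ℓ₂ hzero₂ hadd₂ _ _
  have hcex : ∃ k, c k ≠ 0 := by
    by_contra h
    push_neg at h
    apply hy
    rw [← hyrepr]
    exact Finset.sum_eq_zero fun k _ => by rw [h k, zero_smul]
  obtain ⟨k₀, hk₀⟩ := hcex
  set supp := Finset.univ.filter (fun k => c k ≠ 0) with hsupp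
  have hsne : supp.Nonempty := ⟨k₀, Finset.mem_filter.2 ⟨Finset.mem_univ _, hk₀⟩⟩
  obtain ⟨j, hjs, hjsup⟩ := supp.exists_mem_eq_sup hsne (fun k => ℓ₂ (c k • A (b k)))
  have hcj : c j ≠ 0 := by
    have := Finset.mem_filter.1 (hsupp ▸ hjs)
    exact this.2
  have h2 : ℓ₂ (A y) ≤ ℓ₂ (c j • A (b j)) := by
    refine h1.trans (Finset.sup_le fun k _ => ?_)
    by_cases hk : c k = 0
    · simp [hk, hzero₂]
    · exact (Finset.le_sup (f := fun k => ℓ₂ (c k • A (b k)))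
        (Finset.mem_filter.2 ⟨Finset.mem_univ _, hk⟩)).trans hjsup.le
  have h3 : ℓ₁ (c j • b j) ≤ ℓ₁ y := by
    rw [← hyrepr, hborth c]
    exact Finset.le_sup (f := fun k => ℓ₁ (c k • b k)) (Finset.mem_univ j)
  calc ℓ₂ (A y) - ℓ₁ y ≤ ℓ₂ (c j • A (b j)) - ℓ₁ (c j • b j) := EReal.sub_le_sub h2 h3
    _ = (ℓ₂ (A (b j)) - ν (c j)) - (ℓ₁ (b j) - ν (c j)) := by
        rw [hsmul₂ _ _ hcj, hsmul₁ _ _ hcj]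
    _ = ℓ₂ (A (b j)) - ℓ₁ (b j) := my_ereal_cancel _ _ _
    _ ≤ ℓ₂ (A (b i)) - ℓ₁ (b i) :=
        (Finset.le_sup (f := fun k => ℓ₂ (A (b k)) - ℓ₁ (b k)) (Finset.mem_univ j)).trans
          hisup.le
end

section
/- Let ∂y_C = x_C in a filtered complex C with bar-length L_C = ℓ_C(y_C) − ℓ_C(x_C), and ∂z_D = w_D in a filtered complex D with bar-length L_D = ℓ_D(z_D) − ℓ_D(w_D). Assume x_C ⊗ z_D and y_C ⊗ w_D are orthogonal in C ⊗ D. Then ℓ_⊗(y_C ⊗ z_D) − ℓ_⊗(∂_⊗(y_C ⊗ z_D)) = min(L_C, L_D), i.e. the bar produced by the product of two finite bars has length equal to the minimum of the two lengths. -/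
open scoped TensorProduct

/-- The bar produced by the tensor product of two finite bars
(`∂y_C = x_C` of length `L_C` and `∂z_D = w_D` of length `L_D`, with `x_C ⊗ z_D` and
`y_C ⊗ w_D` orthogonal) has length `min (L_C, L_D)`. -/
theorem tensor_finite_bar_with_finite_bar
    {Λ C D : Type*} [Field Λ]
    [AddCommGroup C] [Module Λ C] [AddCommGroup D] [Module Λ D]
    (dC : C →ₗ[Λ] C) (dD : D →ₗ[Λ] D)
    (ℓC : C → ℝ) (ℓD : D → ℝ) (ℓT : C ⊗[Λ] D → ℝ)
    (hℓT : ∀ (u : C) (v : D), u ≠ 0 → v ≠ 0 → ℓT (u ⊗ₜ v) = ℓC u + ℓD v)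
    (dT : C ⊗[Λ] D →ₗ[Λ] C ⊗[Λ] D) (ε : Λ) (hε : ε = 1 ∨ ε = -1)
    (hdT : ∀ (u : C) (v : D), dT (u ⊗ₜ v) = (dC u) ⊗ₜ v + ε • (u ⊗ₜ (dD v)))
    (yC xC : C) (zD wD : D)
    (hyC : yC ≠ 0) (hxC : xC ≠ 0) (hzD : zD ≠ 0) (hwD : wD ≠ 0)
    (hdy : dC yC = xC) (hdz : dD zD = wD)
    (LC LD : ℝ)
    (hLC : ℓC yC - ℓC xC = LC) (hLD : ℓD zD - ℓD wD = LD)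
    -- orthogonality of `x_C ⊗ z_D` and `y_C ⊗ w_D`
    (horth : ℓT (xC ⊗ₜ zD + ε • (yC ⊗ₜ wD)) =
      max (ℓT (xC ⊗ₜ zD)) (ℓT (yC ⊗ₜ wD))) :
    ℓT (yC ⊗ₜ zD) - ℓT (dT (yC ⊗ₜ zD)) = min LC LD := by
  rw [hdT, hdy, hdz, horth, hℓT yC zD hyC hzD, hℓT xC zD hxC hzD, hℓT yC wD hyC hwD]
  rw [min_def, max_def]
  split_ifs <;> linarith
end
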